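/- Let G be a simple graph on a finite vertex set W with |W| = N, let k ∈ ℕ with N ≥ 2k, and set D = N − 2k + 1. Consider coordinates indexed by W ⊎ {1,…,D}. For each edge e = {u,v} of G, let r_e ∈ {0,1}^{W ⊎ {1,…,D}} be the vector with value 1 exactly at the coordinates d_u, d_v and at all D dummy coordinates; let r be the vector with value 1 exactly at all D dummy coordinates; and let b be the vector with value 1 exactly at all vertex coordinates d_w, w ∈ W. Then G has an independent set of size at least k if and only if there exists c ∈ {0,1}^{W ⊎ {1,…,D}} with con(c) ≤ k such that δ(b,c) < δ(r_e,c) for every edge e of G and δ(b,c) < δ(r,c). -/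

import Mathlib

/-- The red vector of an edge `{u,v}`: value `1` exactly at the vertex coordinates
`d_u`, `d_v` and at all `D` dummy coordinates. -/
def edgeRedVec {W : Type*} [DecidableEq W] (D : ℕ) (u v : W) : W ⊕ Fin D → Bool :=
  Sum.elim (fun w => decide (w = u ∨ w = v)) (fun _ => true)

/-- The extra red vector: value `1` exactly at all `D` dummy coordinates. -/
def dummyRedVec (W : Type*) (D : ℕ) : W ⊕ Fin D → Bool :=
  Sum.elim (fun _ => false) (fun _ => true)

/-- The single blue vector: value `1` exactly at all vertex coordinates. -/
def allVertexBlueVec (W : Type*) (D : ℕ) : W ⊕ Fin D → Bool :=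
  Sum.elim (fun _ => true) (fun _ => false)


open Finset

private lemma filter_sum_card {A B : Type*} [Fintype A] [Fintype B]
    (p : A ⊕ B → Prop) [DecidablePred p] :
    (univ.filter p).card
      = (univ.filter fun a => p (Sum.inl a)).card
        + (univ.filter fun b => p (Sum.inr b)).card := by
  rw [← Finset.card_toLeft_add_card_toRight]
  have h1 : (univ.filter p).toLeft = univ.filter (fun a => p (Sum.inl a)) := by ext x; simp
  have h2 : (univ.filter p).toRight = univ.filter (fun b => p (Sum.inr b)) := by ext x; simp
  rw [h1, h2]

private lemma edge_left_card {W : Type*} [Fintype W] [DecidableEq W]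
    (f : W → Bool) (u v : W) :
    (univ.filter fun w => (decide (w = u ∨ w = v) : Bool) ≠ f w).card
      = (({u, v} : Finset W) \ (univ.filter fun w => f w = true)).card
        + ((univ.filter fun w => f w = true) \ ({u, v} : Finset W)).card := by
  rw [← card_union_of_disjoint disjoint_sdiff_sdiff]
  congr 1
  ext w
  by_cases h : f w <;> simp [h] <;> tauto

private lemma blue_left_card {W : Type*} [Fintype W] [DecidableEq W] (f : W → Bool) :
    (univ.filter fun w => (true : Bool) ≠ f w).card
      = Fintype.card W - (univ.filter fun w => f w = true).card := by
  rw [← Finset.card_compl]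
  congr 1
  ext w
  by_cases h : f w <;> simp [h]

private lemma mem_filter_true {W : Type*} [Fintype W] (f : W → Bool) (w : W) :
    w ∈ (univ.filter fun w => f w = true) ↔ f w = true := by simp

theorem independentSet_iff_concise_center {W : Type*} [Fintype W] [DecidableEq W]
    (G : SimpleGraph W) (N k : ℕ) (hN : Fintype.card W = N) (hk : 2 * k ≤ N)
    (D : ℕ) (hD : D = N - 2 * k + 1) :
    (∃ S : Finset W, k ≤ S.card ∧ ∀ u ∈ S, ∀ v ∈ S, ¬ G.Adj u v) ↔
      (∃ c : W ⊕ Fin D → Bool,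
        (Finset.univ.filter (fun i => c i = true)).card ≤ k ∧
        (∀ u v : W, G.Adj u v →
          hammingDist (allVertexBlueVec W D) c < hammingDist (edgeRedVec D u v) c) ∧
        hammingDist (allVertexBlueVec W D) c < hammingDist (dummyRedVec W D) c) := by
  have hsplit : ∀ x c : W ⊕ Fin D → Bool,
      hammingDist x c
        = (univ.filter fun w => x (Sum.inl w) ≠ c (Sum.inl w)).card
          + (univ.filter fun i => x (Sum.inr i) ≠ c (Sum.inr i)).card :=
    fun x c => filter_sum_card _
  constructor
  · rintro ⟨S0, hS0card, hS0ind⟩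
    obtain ⟨S, hSsub, hScard⟩ := Finset.exists_subset_card_eq hS0card
    set c : W ⊕ Fin D → Bool := Sum.elim (fun w => decide (w ∈ S)) (fun _ => false) with hc
    have hfS : (univ.filter fun w => c (Sum.inl w) = true) = S := by ext w; simp [hc]
    refine ⟨c, ?_, ?_, ?_⟩
    · rw [filter_sum_card]
      have h2 : (univ.filter fun i : Fin D => c (Sum.inr i) = true) = ∅ := by
        ext i; simp [hc]
      rw [hfS, h2, hScard]; simp
    · intro u v huv
      rw [hsplit, hsplit]
      have hblue : (univ.filter fun w =>
          allVertexBlueVec W D (Sum.inl w) ≠ c (Sum.inl w)).card = N - k := by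
        have := blue_left_card (fun w => c (Sum.inl w))
        rw [hfS, hScard, hN] at this
        simpa [allVertexBlueVec] using this
      have hblue2 : (univ.filter fun i : Fin D =>
          allVertexBlueVec W D (Sum.inr i) ≠ c (Sum.inr i)) = ∅ := by
        ext i; simp [allVertexBlueVec, hc]
      have hred2 : (univ.filter fun i : Fin D =>
          edgeRedVec D u v (Sum.inr i) ≠ c (Sum.inr i)) = univ := by
        ext i; simp [edgeRedVec, hc]
      rw [hblue, hblue2, hred2]
      have hleft : (univ.filter fun w =>
            edgeRedVec D u v (Sum.inl w) ≠ c (Sum.inl w)).card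
          = (({u, v} : Finset W) \ S).card + (S \ ({u, v} : Finset W)).card := by
        have := edge_left_card (fun w => c (Sum.inl w)) u v
        rw [hfS] at this
        simpa [edgeRedVec] using this
      -- card of intersection ≤ 1
      have hne : u ≠ v := G.ne_of_adj huv
      have hnotboth : ¬ (u ∈ S ∧ v ∈ S) := by
        rintro ⟨hu, hv⟩
        exact hS0ind u (hSsub hu) v (hSsub hv) huv
      have ha : (({u, v} : Finset W) ∩ S).card ≤ 1 := by
        by_cases hu : u ∈ S
        · have hv : v ∉ S := fun hv => hnotboth ⟨hu, hv⟩
          have : ({u, v} : Finset W) ∩ S ⊆ {u} := by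
            intro w hw
            simp only [mem_inter, mem_insert, mem_singleton] at hw ⊢
            rcases hw.1 with h | h
            · exact h
            · exact absurd (h ▸ hw.2) hv
          calc (({u, v} : Finset W) ∩ S).card ≤ ({u} : Finset W).card := card_le_card this
            _ = 1 := card_singleton u
        · have : ({u, v} : Finset W) ∩ S ⊆ {v} := by
            intro w hw
            simp only [mem_inter, mem_insert, mem_singleton] at hw ⊢
            rcases hw.1 with h | h
            · exact absurd (h ▸ hw.2) hu
            · exact h
          calc (({u, v} : Finset W) ∩ S).card ≤ ({v} : Finset W).card := card_le_card this
            _ = 1 := card_singleton v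
      have hcard2 : ({u, v} : Finset W).card = 2 := by
        rw [card_insert_of_notMem (by simpa using hne), card_singleton]
      have h1 : (({u, v} : Finset W) \ S).card + (({u, v} : Finset W) ∩ S).card = 2 := by
        rw [card_sdiff_add_card_inter, hcard2]
      have h2 : (S \ ({u, v} : Finset W)).card + (S ∩ ({u, v} : Finset W)).card = k := by
        rw [card_sdiff_add_card_inter, hScard]
      rw [inter_comm] at h2
      have hcu : (univ : Finset (Fin D)).card = D := by simp
      rw [hleft, hcu]
      simp only [card_empty]
      have hkN : k ≤ N := by omega
      omega
    · rw [hsplit, hsplit]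
      have hblue : (univ.filter fun w =>
          allVertexBlueVec W D (Sum.inl w) ≠ c (Sum.inl w)).card = N - k := by
        have := blue_left_card (fun w => c (Sum.inl w))
        rw [hfS, hScard, hN] at this
        simpa [allVertexBlueVec] using this
      have hblue2 : (univ.filter fun i : Fin D =>
          allVertexBlueVec W D (Sum.inr i) ≠ c (Sum.inr i)) = ∅ := by
        ext i; simp [allVertexBlueVec, hc]
      have hdum1 : (univ.filter fun w =>
          dummyRedVec W D (Sum.inl w) ≠ c (Sum.inl w)) = S := by
        ext w; simp [dummyRedVec, hc]
      have hdum2 : (univ.filter fun i : Fin D =>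
          dummyRedVec W D (Sum.inr i) ≠ c (Sum.inr i)) = univ := by
        ext i; simp [dummyRedVec, hc]
      rw [hblue, hblue2, hdum1, hdum2, hScard]
      have hcu : (univ : Finset (Fin D)).card = D := by simp
      rw [hcu]
      simp only [card_empty]
      omega
  · rintro ⟨c, hcon, hedge, hdum⟩
    set S : Finset W := univ.filter (fun w => c (Sum.inl w) = true) with hS
    set T : Finset (Fin D) := univ.filter (fun i => c (Sum.inr i) = true) with hT
    have hst : S.card + T.card ≤ k := by
      have h := filter_sum_card (fun i : W ⊕ Fin D => c i = true)
      rw [hS, hT]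
      omega
    have hsN : S.card ≤ N := by rw [← hN]; exact (card_filter_le _ _).trans (by simp)
    have htD : T.card ≤ D := (card_filter_le _ _).trans (by simp)
    -- compute blue distance
    have hblue : hammingDist (allVertexBlueVec W D) c = (N - S.card) + T.card := by
      rw [hsplit]
      congr 1
      · have := blue_left_card (fun w => c (Sum.inl w))
        rw [← hS, hN] at this
        simpa [allVertexBlueVec] using this
      · rw [hT]
        congr 1
        ext i
        cases h : c (Sum.inr i) <;> simp [allVertexBlueVec, h]
    have hdumD : hammingDist (dummyRedVec W D) c = S.card + (D - T.card) := by
      rw [hsplit]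
      congr 1
      · rw [hS]; congr 1; ext w; cases h : c (Sum.inl w) <;> simp [dummyRedVec, h]
      · have := blue_left_card (fun i : Fin D => c (Sum.inr i))
        rw [← hT] at this
        simp only [Fintype.card_fin] at this
        simpa [dummyRedVec] using this
    rw [hblue, hdumD] at hdum
    have hs : S.card = k ∧ T.card = 0 := by omega
    refine ⟨S, hs.1.ge, ?_⟩
    intro u hu v hv huv
    have hdist := hedge u v huv
    rw [hblue] at hdist
    have hredge : hammingDist (edgeRedVec D u v) c
        = ((({u, v} : Finset W) \ S).card + (S \ ({u, v} : Finset W)).card)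
          + (D - T.card) := by
      rw [hsplit]
      congr 1
      · have := edge_left_card (fun w => c (Sum.inl w)) u v
        rw [← hS] at this
        simpa [edgeRedVec] using this
      · have := blue_left_card (fun i : Fin D => c (Sum.inr i))
        rw [← hT] at this
        simp only [Fintype.card_fin] at this
        simpa [edgeRedVec] using this
    rw [hredge] at hdist
    have hsub : ({u, v} : Finset W) ⊆ S := by
      intro w hw
      rcases mem_insert.mp hw with h | h
      · exact h ▸ hu
      · exact (mem_singleton.mp h) ▸ hv
    have h0 : ({u, v} : Finset W) \ S = ∅ := sdiff_eq_empty_iff_subset.mpr hsub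
    have hcard2 : ({u, v} : Finset W).card = 2 := by
      rw [card_insert_of_notMem (by simpa using G.ne_of_adj huv), card_singleton]
    have h2 : (S \ ({u, v} : Finset W)).card + 2 = k := by
      have := card_sdiff_add_card_inter S ({u, v} : Finset W)
      rw [inter_eq_right.mpr hsub, hcard2, hs.1] at this
      exact this
    rw [h0] at hdist
    simp only [card_empty] at hdist
    omega
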